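/- arXiv:math/9910121 — 2 statements merged into one kernel-verified Lean document; each statement's English description precedes it below -/
import Mathlib

section
/- Let 1 → H →ⁱ G →ʲ K → 1 be a split short exact sequence of groups such that K acts trivially on the abelianization quotient H/[H,H]-wise at level 1, meaning the conjugation action of G on H₁/H₂ induced through K is trivial (here Hₖ denotes the k-th lower central series subgroup). Then for each k ≥ 1, the sequence of lower central series quotients 0 → Hₖ/Hₖ₊₁ → Gₖ/Gₖ₊₁ → Kₖ/Kₖ₊₁ → 0 is a split exact sequence of abelian groups. -/
open Subgroup
open scoped commutatorElement

section FRaux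

variable {G : Type*} [Group G]

private lemma FR_lcs_succ (n : ℕ) :
    (⊤ : Subgroup G).lowerCentralSeries (n + 1) = ⁅(⊤ : Subgroup G).lowerCentralSeries n, ⊤⁆ := rfl

private lemma FR_three_sub (A B C N : Subgroup G) [N.Normal]
    (h1 : ⁅⁅B, C⁆, A⁆ ≤ N) (h2 : ⁅⁅C, A⁆, B⁆ ≤ N) : ⁅⁅A, B⁆, C⁆ ≤ N := by
  have key : ∀ X : Subgroup G, X ≤ N ↔ X.map (QuotientGroup.mk' N) = ⊥ := by
    intro X
    rw [Subgroup.map_eq_bot_iff, QuotientGroup.ker_mk']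
  rw [key] at h1 h2 ⊢
  rw [Subgroup.map_commutator, Subgroup.map_commutator] at h1 h2 ⊢
  exact Subgroup.commutator_commutator_eq_bot_of_rotate h1 h2

private lemma FR_lcs_comm (m n : ℕ) :
    ⁅(⊤ : Subgroup G).lowerCentralSeries m, (⊤ : Subgroup G).lowerCentralSeries n⁆ ≤ (⊤ : Subgroup G).lowerCentralSeries (m + n + 1) := by
  induction n generalizing m with
  | zero =>
    rw [Subgroup.lowerCentralSeries_zero]
    exact le_of_eq (FR_lcs_succ m).symm
  | succ n ih =>
    rw [FR_lcs_succ, Subgroup.commutator_comm]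
    apply FR_three_sub
    · -- ⁅⁅⊤, lcs m⁆, lcs n⁆ ≤ lcs (m + (n+1) + 1)
      have : ⁅(⊤ : Subgroup G), (⊤ : Subgroup G).lowerCentralSeries m⁆ = (⊤ : Subgroup G).lowerCentralSeries (m + 1) := by
        rw [Subgroup.commutator_comm, ← FR_lcs_succ]
      rw [this]
      have := ih (m + 1)
      have harith : m + 1 + n + 1 = m + (n + 1) + 1 := by omega
      rwa [harith] at this
    · -- ⁅⁅lcs m, lcs n⁆, ⊤⁆ ≤ lcs (m + (n+1) + 1)
      have h := Subgroup.commutator_mono (ih m) (le_refl (⊤ : Subgroup G))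
      refine le_trans h ?_
      rw [← FR_lcs_succ]
      have he : m + (n + 1) = m + n + 1 := by omega
      rw [he]

variable {H K : Type*} [Group H] [Group K]

/-- Conjugation by any element of `G` moves elements of `Hₗ` by elements of `Hₗ₊₁`. -/
private lemma FR_conjT (i : H →* G)
    (htriv : ∀ (g : G) (a : H), ∃ b ∈ (⊤ : Subgroup H).lowerCentralSeries 1, g * i a * g⁻¹ = i (a * b)) :
    ∀ (l : ℕ) (g : G) (x : H), x ∈ (⊤ : Subgroup H).lowerCentralSeries l →
      ∃ u ∈ (⊤ : Subgroup H).lowerCentralSeries (l + 1), g * i x * g⁻¹ = i (x * u) := by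
  intro l
  induction l with
  | zero =>
    intro g x _
    exact htriv g x
  | succ l ih =>
    intro g
    set D := (⊤ : Subgroup H).lowerCentralSeries (l + 1 + 1) with hD
    let S : Subgroup H :=
      { carrier := {x | ∃ u ∈ D, g * i x * g⁻¹ = i (x * u)}
        one_mem' := ⟨1, one_mem _, by simp⟩
        mul_mem' := by
          rintro x y ⟨u, hu, ex⟩ ⟨v, hv, ey⟩
          refine ⟨(y⁻¹ * u * y) * v, mul_mem ((Subgroup.Normal.conj_mem' inferInstance u hu y)) hv, ?_⟩
          calc g * i (x * y) * g⁻¹ = (g * i x * g⁻¹) * (g * i y * g⁻¹) := by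
                rw [map_mul]; group
            _ = i (x * u) * i (y * v) := by rw [ex, ey]
            _ = i (x * y * (y⁻¹ * u * y * v)) := by rw [← map_mul]; congr 1; group
        inv_mem' := by
          rintro x ⟨u, hu, ex⟩
          refine ⟨x * u⁻¹ * x⁻¹, Subgroup.Normal.conj_mem inferInstance u⁻¹ (inv_mem hu) x, ?_⟩
          calc g * i x⁻¹ * g⁻¹ = (g * i x * g⁻¹)⁻¹ := by rw [map_inv]; group
            _ = (i (x * u))⁻¹ := by rw [ex]
            _ = i (x⁻¹ * (x * u⁻¹ * x⁻¹)) := by rw [← map_inv]; congr 1; group }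
    intro x hx
    have hle : (⊤ : Subgroup H).lowerCentralSeries (l + 1) ≤ S := by
      rw [FR_lcs_succ]
      refine Subgroup.commutator_le.mpr ?_
      intro p hp q hq
      obtain ⟨u, hu, hup⟩ := ih g p hp
      obtain ⟨v, hv, hvq⟩ := htriv g q
      have hmem1 : ⁅u, q * v⁆ ∈ D := by
        rw [hD, FR_lcs_succ]
        exact Subgroup.commutator_mem_commutator hu (mem_top _)
      have hmem2 : ⁅p, v⁆ ∈ D := by
        have := FR_lcs_comm (G := H) l 1
        have h2 : l + 1 + 1 = l + 2 := rfl
        exact this (Subgroup.commutator_mem_commutator hp hv)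
      refine ⟨⁅p, q⁆⁻¹ * (p * ⁅u, q * v⁆ * p⁻¹) * ⁅p, q⁆ * (q * ⁅p, v⁆ * q⁻¹), ?_, ?_⟩
      · refine mul_mem (Subgroup.Normal.conj_mem' inferInstance _ ?_ _)
          (Subgroup.Normal.conj_mem inferInstance _ hmem2 q)
        exact Subgroup.Normal.conj_mem inferInstance _ hmem1 p
      · calc g * i ⁅p, q⁆ * g⁻¹ = ⁅g * i p * g⁻¹, g * i q * g⁻¹⁆ := by
              rw [map_commutatorElement]
              simp only [commutatorElement_def]
              group
          _ = ⁅i (p * u), i (q * v)⁆ := by rw [hup, hvq]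
          _ = i ⁅p * u, q * v⁆ := (map_commutatorElement i _ _).symm
          _ = i (⁅p, q⁆ * (⁅p, q⁆⁻¹ * (p * ⁅u, q * v⁆ * p⁻¹) * ⁅p, q⁆ * (q * ⁅p, v⁆ * q⁻¹))) := by
              congr 1
              simp only [commutatorElement_def]
              group
    exact hle hx

/-- Conjugation by elements of `Gₖ` moves elements of `Hₗ` by elements of `H_{k+l+1}`. -/
private lemma FR_conjA (i : H →* G) (hi : Function.Injective i)
    (htriv : ∀ (g : G) (a : H), ∃ b ∈ (⊤ : Subgroup H).lowerCentralSeries 1, g * i a * g⁻¹ = i (a * b)) :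
    ∀ (k l : ℕ) (g : G), g ∈ (⊤ : Subgroup G).lowerCentralSeries k → ∀ x ∈ (⊤ : Subgroup H).lowerCentralSeries l,
      ∃ u ∈ (⊤ : Subgroup H).lowerCentralSeries (k + l + 1), g * i x * g⁻¹ = i (x * u) := by
  intro k
  induction k with
  | zero =>
    intro l g _ x hx
    obtain ⟨u, hu, he⟩ := FR_conjT i htriv l g x hx
    exact ⟨u, by simpa using hu, he⟩
  | succ k ih =>
    intro l
    set D := (⊤ : Subgroup H).lowerCentralSeries (k + 1 + l + 1) with hD
    let S : Subgroup G :=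
      { carrier := {g | ∀ x ∈ (⊤ : Subgroup H).lowerCentralSeries l, ∃ u ∈ D, g * i x * g⁻¹ = i (x * u)}
        one_mem' := fun x _ => ⟨1, one_mem _, by simp⟩
        mul_mem' := by
          rintro g g' P P' x hx
          obtain ⟨u', hu', e'⟩ := P' x hx
          have hxu' : x * u' ∈ (⊤ : Subgroup H).lowerCentralSeries l :=
            mul_mem hx (Subgroup.lowerCentralSeries_antitone _ (by omega) hu')
          obtain ⟨u'', hu'', e''⟩ := P (x * u') hxu'
          refine ⟨u' * u'', mul_mem hu' hu'', ?_⟩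
          calc (g * g') * i x * (g * g')⁻¹ = g * (g' * i x * g'⁻¹) * g⁻¹ := by group
            _ = g * i (x * u') * g⁻¹ := by rw [e']
            _ = i (x * u' * u'') := e''
            _ = i (x * (u' * u'')) := by rw [mul_assoc]
        inv_mem' := by
          rintro g P x hx
          obtain ⟨u₀, hu₀, e₀⟩ := FR_conjT i htriv l g⁻¹ x hx
          have hy : x * u₀ ∈ (⊤ : Subgroup H).lowerCentralSeries l :=
            mul_mem hx (Subgroup.lowerCentralSeries_antitone _ (by omega) hu₀)
          obtain ⟨u, hu, e⟩ := P (x * u₀) hy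
          have hix : i x = i (x * u₀ * u) := by
            rw [← e, ← e₀]; group
          have hxx : x = x * u₀ * u := hi hix
          refine ⟨u⁻¹, inv_mem hu, ?_⟩
          rw [e₀]
          congr 1
          have h2 := congrArg (fun z => z * u⁻¹) hxx
          simpa [mul_assoc] using h2.symm }
    have hSmem : ∀ g' : G, g' ∈ S ↔
        ∀ x ∈ (⊤ : Subgroup H).lowerCentralSeries l, ∃ u ∈ D, g' * i x * g'⁻¹ = i (x * u) :=
      fun _ => Iff.rfl
    intro g hg x hx
    have hle : (⊤ : Subgroup G).lowerCentralSeries (k + 1) ≤ S := by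
      rw [FR_lcs_succ]
      refine Subgroup.commutator_le.mpr ?_
      intro g₁ hg₁ t _
      rw [hSmem]
      intro x hx
      obtain ⟨a, ha, ea⟩ := FR_conjT i htriv l t⁻¹ x hx
      rw [inv_inv] at ea
      -- ea : t⁻¹ * i x * t = i (x * a)
      have hxa : x * a ∈ (⊤ : Subgroup H).lowerCentralSeries l :=
        mul_mem hx (Subgroup.lowerCentralSeries_antitone _ (by omega) ha)
      obtain ⟨b, hb, eb⟩ := ih l g₁⁻¹ (inv_mem hg₁) (x * a) hxa
      rw [inv_inv] at eb
      -- eb : g₁⁻¹ * i (x * a) * g₁ = i (x * a * b)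
      obtain ⟨b₂, hb₂, eb₂⟩ := FR_conjT i htriv (k + l + 1) t b hb
      obtain ⟨c₁, hc₁, ec₁⟩ := ih l g₁ hg₁ x hx
      obtain ⟨c₄, hc₄, ec₄⟩ := ih (l + 1) g₁ hg₁ a ha
      obtain ⟨c₅, hc₅, ec₅⟩ := FR_conjT i htriv (k + l + 1) g₁ b hb
      obtain ⟨c₆, hc₆, ec₆⟩ := FR_conjT i htriv (k + l + 1 + 1) g₁ b₂ hb₂
      have hix' : t * i (x * a) * t⁻¹ = i x := by rw [← ea]; group
      -- the relation forced by injectivity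
      have erel : i (x * a) = i (x * (c₁ * ((a * c₄) * (b * c₅)))) := by
        calc i (x * a) = g₁ * i (x * a * b) * g₁⁻¹ := by rw [← eb]; group
          _ = (g₁ * i x * g₁⁻¹) * (g₁ * i a * g₁⁻¹) * (g₁ * i b * g₁⁻¹) := by
              simp only [map_mul]; group
          _ = i (x * c₁) * i (a * c₄) * i (b * c₅) := by rw [ec₁, ec₄, ec₅]
          _ = i (x * (c₁ * ((a * c₄) * (b * c₅)))) := by
              simp only [← map_mul]; congr 1; group
      have hrel : a = c₁ * ((a * c₄) * (b * c₅)) := mul_left_cancel (hi erel)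
      have h5 : b * c₅ = (a * c₄)⁻¹ * (c₁⁻¹ * a) := by
        apply mul_left_cancel (a := c₁ * (a * c₄))
        calc c₁ * (a * c₄) * (b * c₅) = c₁ * ((a * c₄) * (b * c₅)) := by group
          _ = a := hrel.symm
          _ = c₁ * (a * c₄) * ((a * c₄)⁻¹ * (c₁⁻¹ * a)) := by group
      have hwmem : c₁ * ((b * c₅) * (b₂ * c₆)) ∈ D := by
        rw [h5]
        have hexp : c₁ * (((a * c₄)⁻¹ * (c₁⁻¹ * a)) * (b₂ * c₆)) =
            (c₁ * c₄⁻¹ * c₁⁻¹) * (⁅c₁, a⁻¹⁆ * (b₂ * c₆)) := by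
          simp only [commutatorElement_def]; group
        rw [hexp]
        refine mul_mem ?_ (mul_mem ?_ (mul_mem ?_ ?_))
        · exact Subgroup.Normal.conj_mem inferInstance _
            (inv_mem (Subgroup.lowerCentralSeries_antitone _ (by omega) hc₄)) c₁
        · have : ⁅c₁, a⁻¹⁆ ∈ (⊤ : Subgroup H).lowerCentralSeries (k + l + 1 + 1) := by
            rw [FR_lcs_succ]
            exact Subgroup.commutator_mem_commutator hc₁ (Subgroup.mem_top _)
          exact Subgroup.lowerCentralSeries_antitone _ (by omega) this
        · exact Subgroup.lowerCentralSeries_antitone _ (by omega) hb₂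
        · exact Subgroup.lowerCentralSeries_antitone _ (by omega) hc₆
      refine ⟨c₁ * ((b * c₅) * (b₂ * c₆)), hwmem, ?_⟩
      calc ⁅g₁, t⁆ * i x * ⁅g₁, t⁆⁻¹
          = g₁ * (t * (g₁⁻¹ * (t⁻¹ * i x * t) * g₁) * t⁻¹) * g₁⁻¹ := by
            simp only [commutatorElement_def]; group
        _ = g₁ * (t * (g₁⁻¹ * i (x * a) * g₁) * t⁻¹) * g₁⁻¹ := by rw [ea]
        _ = g₁ * (t * i (x * a * b) * t⁻¹) * g₁⁻¹ := by rw [eb]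
        _ = g₁ * ((t * i (x * a) * t⁻¹) * (t * i b * t⁻¹)) * g₁⁻¹ := by
            simp only [map_mul]; group
        _ = g₁ * (i x * i (b * b₂)) * g₁⁻¹ := by rw [eb₂, hix']
        _ = (g₁ * i x * g₁⁻¹) * (g₁ * i b * g₁⁻¹) * (g₁ * i b₂ * g₁⁻¹) := by
            simp only [map_mul]; group
        _ = i (x * c₁) * i (b * c₅) * i (b₂ * c₆) := by rw [ec₁, ec₅, ec₆]
        _ = i (x * (c₁ * ((b * c₅) * (b₂ * c₆)))) := by
            simp only [← map_mul]; congr 1; group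
    exact (hSmem g).mp (hle hg) x hx

private lemma FR_comm_helper {M : Type*} [Group M] (A S B T : M)
    (hA : ∀ z, z * A = A * z) (hSB : S * B = B * S) (hE : ⁅S, T⁆ * B = B * ⁅S, T⁆) :
    ⁅A * S, B * T⁆ = ⁅S, T⁆ := by
  calc ⁅A * S, B * T⁆ = A * (S * B * T * S⁻¹) * A⁻¹ * (T⁻¹ * B⁻¹) := by
        simp only [commutatorElement_def]; group
    _ = S * B * T * S⁻¹ * A * A⁻¹ * (T⁻¹ * B⁻¹) := by rw [← hA (S * B * T * S⁻¹)]
    _ = S * B * T * S⁻¹ * T⁻¹ * B⁻¹ := by group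
    _ = B * S * T * S⁻¹ * T⁻¹ * B⁻¹ := by rw [hSB]
    _ = B * ⁅S, T⁆ * B⁻¹ := by simp only [commutatorElement_def]; group
    _ = ⁅S, T⁆ := by rw [← hE, mul_inv_cancel_right]

/-- Splitting of `Gₖ`:  every element of `Gₖ` is `i a * s (j g)` with `a ∈ Hₖ`. -/
private lemma FR_splitP (i : H →* G) (j : G →* K) (s : K →* G)
    (hi : Function.Injective i) (hexact : i.range = j.ker)
    (hsplit : j.comp s = MonoidHom.id K)
    (htriv : ∀ (g : G) (a : H), ∃ b ∈ (⊤ : Subgroup H).lowerCentralSeries 1, g * i a * g⁻¹ = i (a * b)) :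
    ∀ (k : ℕ) (g : G), g ∈ (⊤ : Subgroup G).lowerCentralSeries k →
      ∃ a ∈ (⊤ : Subgroup H).lowerCentralSeries k, g = i a * s (j g) := by
  have hjs : ∀ c : K, j (s c) = c := fun c => DFunLike.congr_fun hsplit c
  intro k
  induction k with
  | zero =>
    intro g _
    have hker : g * (s (j g))⁻¹ ∈ j.ker := by
      rw [MonoidHom.mem_ker, map_mul, map_inv, hjs]
      group
    rw [← hexact] at hker
    obtain ⟨a, ha⟩ := hker
    exact ⟨a, Subgroup.mem_top a, by rw [ha]; group⟩
  | succ k ih =>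
    let Q : Subgroup G :=
      { carrier := {g | ∃ a ∈ (⊤ : Subgroup H).lowerCentralSeries (k + 1), g = i a * s (j g)}
        one_mem' := ⟨1, one_mem _, by simp⟩
        mul_mem' := by
          rintro g g' ⟨a, ha, ea⟩ ⟨a', ha', ea'⟩
          obtain ⟨u, hu, eu⟩ := FR_conjT i htriv (k + 1) (s (j g)) a' ha'
          refine ⟨a * (a' * u),
            mul_mem ha (mul_mem ha' (Subgroup.lowerCentralSeries_antitone _ (by omega) hu)), ?_⟩
          calc g * g' = (i a * s (j g)) * (i a' * s (j g')) := by rw [← ea, ← ea']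
            _ = i a * (s (j g) * i a' * (s (j g))⁻¹) * (s (j g) * s (j g')) := by group
            _ = i a * i (a' * u) * (s (j g) * s (j g')) := by rw [eu]
            _ = i (a * (a' * u)) * s (j (g * g')) := by
                rw [← map_mul, ← map_mul, ← map_mul]
        inv_mem' := by
          rintro g ⟨a, ha, ea⟩
          obtain ⟨u, hu, eu⟩ := FR_conjT i htriv (k + 1) (s (j g))⁻¹ a⁻¹ (inv_mem ha)
          refine ⟨a⁻¹ * u,
            mul_mem (inv_mem ha) (Subgroup.lowerCentralSeries_antitone _ (by omega) hu), ?_⟩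
          calc g⁻¹ = (i a * s (j g))⁻¹ := by rw [← ea]
            _ = ((s (j g))⁻¹ * i a⁻¹ * ((s (j g))⁻¹)⁻¹) * (s (j g))⁻¹ := by
                rw [map_inv]; group
            _ = i (a⁻¹ * u) * (s (j g))⁻¹ := by rw [eu]
            _ = i (a⁻¹ * u) * s (j g⁻¹) := by rw [map_inv, map_inv] }
    have hQmem : ∀ g' : G, g' ∈ Q ↔
        ∃ a ∈ (⊤ : Subgroup H).lowerCentralSeries (k + 1), g' = i a * s (j g') := fun _ => Iff.rfl
    intro g₀ hg₀
    have hle : (⊤ : Subgroup G).lowerCentralSeries (k + 1) ≤ Q := by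
      rw [FR_lcs_succ]
      refine Subgroup.commutator_le.mpr ?_
      intro g hg t _
      rw [hQmem]
      obtain ⟨a, ha, ea⟩ := ih g hg
      have hker : t * (s (j t))⁻¹ ∈ j.ker := by
        rw [MonoidHom.mem_ker, map_mul, map_inv, hjs]
        group
      rw [← hexact] at hker
      obtain ⟨b, hb⟩ := hker
      have eb : t = i b * s (j t) := by rw [hb]; group
      set N := ((⊤ : Subgroup H).lowerCentralSeries (k + 1)).map i with hN
      haveI hNnormal : N.Normal := by
        constructor
        rintro _ ⟨x, hx, rfl⟩ g'
        obtain ⟨u, hu, eu⟩ := FR_conjT i htriv (k + 1) g' x hx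
        exact ⟨x * u, mul_mem hx (Subgroup.lowerCentralSeries_antitone _ (by omega) hu), eu.symm⟩
      set π := QuotientGroup.mk' N with hπ
      have hπ1 : ∀ u ∈ (⊤ : Subgroup H).lowerCentralSeries (k + 1), π (i u) = 1 := fun u hu =>
        (QuotientGroup.eq_one_iff _).mpr ⟨u, hu, rfl⟩
      have hcen : ∀ x ∈ (⊤ : Subgroup H).lowerCentralSeries k, ∀ g' : G,
          π g' * π (i x) = π (i x) * π g' := by
        intro x hx g'
        obtain ⟨u, hu, eu⟩ := FR_conjT i htriv k g' x hx
        calc π g' * π (i x) = π (g' * i x) := (map_mul π g' (i x)).symm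
          _ = π (i x * i u * g') := by
              rw [show g' * i x = i x * i u * g' from by rw [← map_mul, ← eu]; group]
          _ = π (i x) * π (i u) * π g' := by rw [map_mul, map_mul]
          _ = π (i x) * π g' := by rw [hπ1 u hu, mul_one]
      have hcomm : ∀ g' ∈ (⊤ : Subgroup G).lowerCentralSeries k, ∀ x : H,
          π g' * π (i x) = π (i x) * π g' := by
        intro g' hg' x
        obtain ⟨u, hu, eu⟩ := FR_conjA i hi htriv k 0 g' hg' x (Subgroup.mem_top x)
        calc π g' * π (i x) = π (g' * i x) := (map_mul π g' (i x)).symm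
          _ = π (i x * i u * g') := by
              rw [show g' * i x = i x * i u * g' from by rw [← map_mul, ← eu]; group]
          _ = π (i x) * π (i u) * π g' := by rw [map_mul, map_mul]
          _ = π (i x) * π g' := by
              rw [hπ1 u (Subgroup.lowerCentralSeries_antitone _ (by omega) hu), mul_one]
      have hc : j g ∈ (⊤ : Subgroup K).lowerCentralSeries k := Subgroup.lowerCentralSeries.map j k ⟨g, hg, rfl⟩
      have hsc : s (j g) ∈ (⊤ : Subgroup G).lowerCentralSeries k :=
        Subgroup.lowerCentralSeries.map s k ⟨j g, hc, rfl⟩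
      have hcd : ⁅j g, j t⁆ ∈ (⊤ : Subgroup K).lowerCentralSeries (k + 1) := by
        rw [FR_lcs_succ]
        exact Subgroup.commutator_mem_commutator hc (Subgroup.mem_top _)
      have hscd : s ⁅j g, j t⁆ ∈ (⊤ : Subgroup G).lowerCentralSeries k :=
        Subgroup.lowerCentralSeries.map s k ⟨⁅j g, j t⁆, Subgroup.lowerCentralSeries_antitone _ (by omega) hcd, rfl⟩
      have hST : ⁅π (s (j g)), π (s (j t))⁆ = π (s ⁅j g, j t⁆) := by
        rw [map_commutatorElement, map_commutatorElement]
      have hq : π ⁅g, t⁆ = π (s ⁅j g, j t⁆) := by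
        calc π ⁅g, t⁆ = ⁅π g, π t⁆ := map_commutatorElement π g t
          _ = ⁅π (i a) * π (s (j g)), π (i b) * π (s (j t))⁆ := by
              rw [show π g = π (i a) * π (s (j g)) from by
                    rw [← map_mul]; exact congrArg π ea,
                  show π t = π (i b) * π (s (j t)) from by
                    rw [← map_mul]; exact congrArg π eb]
          _ = ⁅π (s (j g)), π (s (j t))⁆ := by
              refine FR_comm_helper _ _ _ _ ?_ ?_ ?_
              · intro z
                obtain ⟨g', rfl⟩ := QuotientGroup.mk'_surjective N z
                exact hcen a ha g'
              · exact hcomm _ hsc b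
              · rw [hST]
                exact hcomm _ hscd b
          _ = π (s ⁅j g, j t⁆) := hST
      obtain ⟨z, hz, ez⟩ := ((QuotientGroup.mk'_eq_mk' N).mp hq)
      obtain ⟨u, hu, huz⟩ := hz
      obtain ⟨v, hv, ev⟩ := FR_conjT i htriv (k + 1) (s ⁅j g, j t⁆) u⁻¹ (inv_mem hu)
      refine ⟨u⁻¹ * v,
        mul_mem (inv_mem hu) (Subgroup.lowerCentralSeries_antitone _ (by omega) hv), ?_⟩
      have ejt : j ⁅g, t⁆ = ⁅j g, j t⁆ := map_commutatorElement j g t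
      rw [ejt]
      calc ⁅g, t⁆ = s ⁅j g, j t⁆ * (i u)⁻¹ := by
            rw [← huz] at ez
            rw [← ez]; group
        _ = (s ⁅j g, j t⁆ * i u⁻¹ * (s ⁅j g, j t⁆)⁻¹) * s ⁅j g, j t⁆ := by
            rw [map_inv]; group
        _ = i (u⁻¹ * v) * s ⁅j g, j t⁆ := by rw [ev]
    exact (hQmem g₀).mp (hle hg₀)

end FRaux




/-- **Falk–Randell.**  Let `1 → H → G → K → 1` be a split extension such that `K` acts
trivially on `H₁/H₂` (conjugation in `G` moves elements of `H` only by elements of the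
commutator subgroup of `H`).  Then for every `k`, the induced sequence of lower central
series quotients `0 → Hₖ/Hₖ₊₁ → Gₖ/Gₖ₊₁ → Kₖ/Kₖ₊₁ → 0` is split exact (stated
elementwise; here `lowerCentralSeries · k` is the paper's `(k+1)`-st term). -/
theorem stmt_13 {H G K : Type*} [Group H] [Group G] [Group K]
    (i : H →* G) (j : G →* K) (s : K →* G)
    (hi : Function.Injective i) (hexact : i.range = j.ker)
    (hsplit : j.comp s = MonoidHom.id K) (hsurj : Function.Surjective j)
    (htriv : ∀ (g : G) (a : H), ∃ b ∈ (⊤ : Subgroup H).lowerCentralSeries 1,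
      g * i a * g⁻¹ = i (a * b)) :
    ∀ k : ℕ,
      (∀ a ∈ (⊤ : Subgroup H).lowerCentralSeries k, i a ∈ (⊤ : Subgroup G).lowerCentralSeries k) ∧
      (∀ a ∈ (⊤ : Subgroup H).lowerCentralSeries k,
        i a ∈ (⊤ : Subgroup G).lowerCentralSeries (k + 1) → a ∈ (⊤ : Subgroup H).lowerCentralSeries (k + 1)) ∧
      (∀ g ∈ (⊤ : Subgroup G).lowerCentralSeries k, j g ∈ (⊤ : Subgroup K).lowerCentralSeries k) ∧
      (∀ g ∈ (⊤ : Subgroup G).lowerCentralSeries k,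
        (j g ∈ (⊤ : Subgroup K).lowerCentralSeries (k + 1) ↔
          ∃ a ∈ (⊤ : Subgroup H).lowerCentralSeries k,
            g * (i a)⁻¹ ∈ (⊤ : Subgroup G).lowerCentralSeries (k + 1))) ∧
      (∀ c ∈ (⊤ : Subgroup K).lowerCentralSeries k,
        s c ∈ (⊤ : Subgroup G).lowerCentralSeries k ∧ j (s c) = c) := by
  intro k
  have himap : ∀ a ∈ (⊤ : Subgroup H).lowerCentralSeries k, i a ∈ (⊤ : Subgroup G).lowerCentralSeries k :=
    fun a ha => Subgroup.lowerCentralSeries.map i k ⟨a, ha, rfl⟩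
  have hjmap : ∀ m : ℕ, ∀ g ∈ (⊤ : Subgroup G).lowerCentralSeries m, j g ∈ (⊤ : Subgroup K).lowerCentralSeries m :=
    fun m g hg => Subgroup.lowerCentralSeries.map j m ⟨g, hg, rfl⟩
  have hsmap : ∀ m : ℕ, ∀ c ∈ (⊤ : Subgroup K).lowerCentralSeries m, s c ∈ (⊤ : Subgroup G).lowerCentralSeries m :=
    fun m c hc => Subgroup.lowerCentralSeries.map s m ⟨c, hc, rfl⟩
  have hjs : ∀ c : K, j (s c) = c := fun c => DFunLike.congr_fun hsplit c
  have hji : ∀ a : H, j (i a) = 1 := by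
    intro a
    have hmem : i a ∈ j.ker := by
      rw [← hexact]
      exact ⟨a, rfl⟩
    exact hmem
  refine ⟨himap, ?_, hjmap k, ?_, fun c hc => ⟨hsmap k c hc, hjs c⟩⟩
  · intro a ha hia
    obtain ⟨a', ha', e⟩ := FR_splitP i j s hi hexact hsplit htriv (k + 1) (i a) hia
    rw [hji a, map_one, mul_one] at e
    rw [hi e]
    exact ha'
  · intro g hg
    constructor
    · intro hjg
      obtain ⟨a, ha, ea⟩ := FR_splitP i j s hi hexact hsplit htriv k g hg
      refine ⟨a, ha, ?_⟩
      have hs1 : s (j g) ∈ (⊤ : Subgroup G).lowerCentralSeries (k + 1) := hsmap (k + 1) _ hjg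
      rw [show g * (i a)⁻¹ = i a * s (j g) * (i a)⁻¹ from by conv_lhs => rw [ea]]
      exact Subgroup.Normal.conj_mem inferInstance _ hs1 (i a)
    · rintro ⟨a, ha, hmem⟩
      have h1 : j (g * (i a)⁻¹) ∈ (⊤ : Subgroup K).lowerCentralSeries (k + 1) := hjmap (k + 1) _ hmem
      have h2 : j g = j (g * (i a)⁻¹) := by
        rw [map_mul, map_inv, hji, inv_one, mul_one]
      rw [h2]
      exact h1
end

section
/- Let G be a group whose lower central series quotients Gₖ/Gₖ₊₁ are generated by the images of elements x, y, w ∈ G with x ∈ G, y, w in a normal subgroup H, and suppose x⁻¹yx = wyw⁻¹ in G. Then in the associated graded Lie ring gr G = ⊕ₖ Gₖ/Gₖ₊₁ with bracket induced by commutators, the relation [x̄ + w̄, ȳ] = 0 holds, where x̄, ȳ, w̄ denote images in the respective graded pieces (x̄, w̄ in degree 1, ȳ in degree 1). -/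
open scoped commutatorElement

/-- If `y, w` lie in a normal subgroup `H` of `G` and `x⁻¹yx = wyw⁻¹`, then the
commutator `[xw, y]` lies in the third lower central series term `G₃`
(`lowerCentralSeries G 2` in Mathlib's indexing), i.e. the relation
`[x̄ + w̄, ȳ] = 0` holds in the associated graded Lie ring `gr G`. -/
theorem stmt_19 {G : Type*} [Group G] (H : Subgroup G) [H.Normal]
    (x y w : G) (hy : y ∈ H) (hw : w ∈ H)
    (h : x⁻¹ * y * x = w * y * w⁻¹) :
    ⁅x * w, y⁆ ∈ (⊤ : Subgroup G).lowerCentralSeries 2 := by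
  have : ⁅x * w, y⁆ = 1 := by
    rw [commutatorElement_def]
    have : x * (w * y * w⁻¹) * x⁻¹ * y⁻¹ = 1 := by
      rw [← h]; group
    calc x * w * y * (x * w)⁻¹ * y⁻¹ = x * (w * y * w⁻¹) * x⁻¹ * y⁻¹ := by group
      _ = 1 := this
  rw [this]
  exact Subgroup.one_mem _
end
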